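/- Let E_top = {{T'_1,T'_2},{T'_2,T'_3},{T'_3,T'_4},{T'_4,T'_1}} and E_bot = {{T_5,T_6},{T_6,T_7},{T_7,T_8},{T_8,T_5}}. The subsets A of E_top ∪ E_bot in which every one of the eight points T'_1,…,T'_4,T_5,…,T_8 lies on an even number of edges of A are exactly the four subsets ∅, E_top, E_bot and E_top ∪ E_bot, and under the componentwise action of G' these four subsets fall into exactly 3 orbits, namely {∅}, {E_top, E_bot} and {E_top ∪ E_bot}. (The orbit of E_top ∪ E_bot corresponds to the monohedral tiling FB𝒪 and the other two nontrivial data give the 2 dihedral f-tilings derived from FB𝒪 by a-edge assignments.) -/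

import Mathlib

open Matrix

attribute [local instance] Classical.propDecidable

/-- `τ = (2√2+1)/7`. -/
noncomputable def tau : ℝ := (2 * Real.sqrt 2 + 1) / 7

/-- The eight points `T'_1, T'_2, T'_3, T'_4, T_5, T_6, T_7, T_8` (indexed by
`Fin 8`; indices `0,…,3` are the top points `T'_k`, indices `4,…,7` are the bottom
points `T_k`). -/
noncomputable def P8 : Fin 8 → Fin 3 → ℝ :=
  ![tau • ![Real.sqrt 2, 0, 1], tau • ![0, Real.sqrt 2, 1],
    tau • ![-Real.sqrt 2, 0, 1], tau • ![0, -Real.sqrt 2, 1],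
    tau • ![1, 1, -1], tau • ![-1, 1, -1], tau • ![-1, -1, -1], tau • ![1, -1, -1]]

/-- The top square edges. -/
def Etop : Finset (Sym2 (Fin 8)) := {s(0, 1), s(1, 2), s(2, 3), s(3, 0)}

/-- The bottom square edges. -/
def Ebot : Finset (Sym2 (Fin 8)) := {s(4, 5), s(5, 6), s(6, 7), s(7, 4)}

/-- Every one of the eight points lies on an even number of edges of `A`. -/
noncomputable def EvenIncidence (A : Finset (Sym2 (Fin 8))) : Prop :=
  ∀ i : Fin 8, Even (A.filter fun e => i ∈ e).card

/-- The matrix `σ'₂` with rows `(1/√2, 1/√2, 0), (−1/√2, 1/√2, 0), (0, 0, −1)`. -/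
noncomputable def sigma2' : Matrix (Fin 3) (Fin 3) ℝ :=
  !![1 / Real.sqrt 2, 1 / Real.sqrt 2, 0;
     -(1 / Real.sqrt 2), 1 / Real.sqrt 2, 0;
     0, 0, -1]

/-- The matrix `σ' = diag(1, −1, 1)`. -/
def sigma' : Matrix (Fin 3) (Fin 3) ℝ := !![1, 0, 0; 0, -1, 0; 0, 0, 1]

/-- `G'`: the subgroup of `GL(3,ℝ)` generated by `σ'₂` and `σ'`. -/
noncomputable def G' : Subgroup (GL (Fin 3) ℝ) :=
  Subgroup.closure {g | (↑g : Matrix (Fin 3) (Fin 3) ℝ) = sigma2' ∨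
    (↑g : Matrix (Fin 3) (Fin 3) ℝ) = sigma'}

/-- `A'` is the image of the edge set `A` under the componentwise action of `u`. -/
noncomputable def edgeAct (u : GL (Fin 3) ℝ) (A A' : Finset (Sym2 (Fin 8))) : Prop :=
  ∀ e' : Sym2 (Fin 8), e' ∈ A' ↔
    ∃ e ∈ A, ∃ i j i' j' : Fin 8, e = s(i, j) ∧ e' = s(i', j') ∧
      (↑u : Matrix (Fin 3) (Fin 3) ℝ).mulVec (P8 i) = P8 i' ∧
      (↑u : Matrix (Fin 3) (Fin 3) ℝ).mulVec (P8 j) = P8 j'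

/-! ### vector evaluation lemmas -/
section vecs
variable {α : Type*}
lemma vec8_0 (x0 x1 x2 x3 x4 x5 x6 x7 : α) : ![x0,x1,x2,x3,x4,x5,x6,x7] 0 = x0 := rfl
lemma vec8_1 (x0 x1 x2 x3 x4 x5 x6 x7 : α) : ![x0,x1,x2,x3,x4,x5,x6,x7] 1 = x1 := rfl
lemma vec8_2 (x0 x1 x2 x3 x4 x5 x6 x7 : α) : ![x0,x1,x2,x3,x4,x5,x6,x7] 2 = x2 := rfl
lemma vec8_3 (x0 x1 x2 x3 x4 x5 x6 x7 : α) : ![x0,x1,x2,x3,x4,x5,x6,x7] 3 = x3 := rfl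
lemma vec8_4 (x0 x1 x2 x3 x4 x5 x6 x7 : α) : ![x0,x1,x2,x3,x4,x5,x6,x7] 4 = x4 := rfl
lemma vec8_5 (x0 x1 x2 x3 x4 x5 x6 x7 : α) : ![x0,x1,x2,x3,x4,x5,x6,x7] 5 = x5 := rfl
lemma vec8_6 (x0 x1 x2 x3 x4 x5 x6 x7 : α) : ![x0,x1,x2,x3,x4,x5,x6,x7] 6 = x6 := rfl
lemma vec8_7 (x0 x1 x2 x3 x4 x5 x6 x7 : α) : ![x0,x1,x2,x3,x4,x5,x6,x7] 7 = x7 := rfl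
lemma vec3_0 (x0 x1 x2 : α) : ![x0,x1,x2] 0 = x0 := rfl
lemma vec3_1 (x0 x1 x2 : α) : ![x0,x1,x2] 1 = x1 := rfl
lemma vec3_2 (x0 x1 x2 : α) : ![x0,x1,x2] 2 = x2 := rfl
end vecs

/-! ### numeric facts -/
lemma tau_pos : 0 < tau := by
  have := Real.sqrt_nonneg 2
  unfold tau; positivity
lemma sqrt2_pos : 0 < Real.sqrt 2 := Real.sqrt_pos.mpr (by norm_num)
lemma sq_sqrt2 : Real.sqrt 2 * Real.sqrt 2 = 2 := Real.mul_self_sqrt (by norm_num)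

/-! ### injectivity of P8 -/
def pz : Fin 8 → Fin 3 → ℤ × ℤ :=
  ![![(0,1),(0,0),(1,0)], ![(0,0),(0,1),(1,0)], ![(0,-1),(0,0),(1,0)], ![(0,0),(0,-1),(1,0)],
    ![(1,0),(1,0),(-1,0)], ![(-1,0),(1,0),(-1,0)], ![(-1,0),(-1,0),(-1,0)], ![(1,0),(-1,0),(-1,0)]]

set_option maxHeartbeats 1000000 in
lemma P8_eq (k : Fin 8) (j : Fin 3) :
    P8 k j = tau * (((pz k j).1 : ℝ) + ((pz k j).2 : ℝ) * Real.sqrt 2) := by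
  fin_cases k <;> fin_cases j <;>
    simp only [P8, pz, vec8_0, vec8_1, vec8_2, vec8_3, vec8_4, vec8_5, vec8_6, vec8_7,
      vec3_0, vec3_1, vec3_2, Pi.smul_apply, smul_eq_mul, Fin.reduceFinMk] <;> norm_num

lemma int_sqrt2 {x y x' y' : ℤ} (h : (x:ℝ) + y * Real.sqrt 2 = x' + y' * Real.sqrt 2) :
    x = x' ∧ y = y' := by
  by_cases hy : y = y'
  · subst hy
    refine ⟨?_, rfl⟩
    have : (x:ℝ) = x' := by linarith
    exact_mod_cast this
  · exfalso
    apply irrational_sqrt_two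
    refine ⟨((x - x' : ℤ) : ℚ) / ((y' - y : ℤ) : ℚ), ?_⟩
    have hyy : ((y' : ℝ) - y) ≠ 0 := by
      intro hc
      apply hy
      have : (y:ℝ) = y' := by linarith
      exact (by exact_mod_cast this : y = y')
    push_cast
    field_simp
    linarith

lemma P8_inj : Function.Injective P8 := by
  intro a b h
  have hz : ∀ j, pz a j = pz b j := by
    intro j
    have h1 := congrFun h j
    rw [P8_eq, P8_eq] at h1
    have h2 := mul_left_cancel₀ (ne_of_gt tau_pos) h1
    have := int_sqrt2 h2
    exact Prod.ext this.1 this.2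
  have : ∀ a b : Fin 8, (∀ j, pz a j = pz b j) → a = b := by decide
  exact this a b hz

/-! ### sigma2' as a GL element -/
lemma sigma2'_apply (i j : Fin 3) :
    sigma2' i j = ![![1 / Real.sqrt 2, 1 / Real.sqrt 2, 0],
      ![-(1 / Real.sqrt 2), 1 / Real.sqrt 2, 0], ![0, 0, -1]] i j := rfl

lemma sigma2'_mul_transpose : sigma2' * sigma2'ᵀ = 1 := by
  have h := sq_sqrt2
  have h0 := sqrt2_pos.ne'
  ext i j
  fin_cases i <;> fin_cases j <;>
    · simp only [Matrix.mul_apply, Matrix.transpose_apply, Fin.sum_univ_three, sigma2'_apply,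
        vec3_0, vec3_1, vec3_2, Matrix.one_apply, Fin.reduceFinMk]
      try norm_num
      try field_simp
      try rw [if_neg (by decide)]
      try (rw [Real.sq_sqrt (by norm_num)]; norm_num)
      try decide

lemma transpose_mul_sigma2' : sigma2'ᵀ * sigma2' = 1 := by
  have h := sq_sqrt2
  have h0 := sqrt2_pos.ne'
  ext i j
  fin_cases i <;> fin_cases j <;>
    · simp only [Matrix.mul_apply, Matrix.transpose_apply, Fin.sum_univ_three, sigma2'_apply,
        vec3_0, vec3_1, vec3_2, Matrix.one_apply, Fin.reduceFinMk]
      try norm_num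
      try field_simp
      try rw [if_neg (by decide)]
      try (rw [Real.sq_sqrt (by norm_num)]; norm_num)
      try decide

noncomputable def u2 : GL (Fin 3) ℝ :=
  ⟨sigma2', sigma2'ᵀ, sigma2'_mul_transpose, transpose_mul_sigma2'⟩

lemma u2_coe : (↑u2 : Matrix (Fin 3) (Fin 3) ℝ) = sigma2' := rfl

lemma u2_mem : u2 ∈ G' := Subgroup.subset_closure (Or.inl rfl)

lemma mv0 : sigma2'.mulVec (P8 0) = P8 7 := by
  have h := sq_sqrt2
  have h0 := sqrt2_pos.ne'
  funext j
  fin_cases j <;>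
    · simp only [Matrix.mulVec, dotProduct, Fin.sum_univ_three, sigma2'_apply, P8,
        vec3_0, vec3_1, vec3_2, vec8_0, vec8_1, vec8_2, vec8_3, vec8_4, vec8_5, vec8_6, vec8_7,
        Pi.smul_apply, smul_eq_mul, Fin.reduceFinMk]
      field_simp
      ring

lemma mv1 : sigma2'.mulVec (P8 1) = P8 4 := by
  have h := sq_sqrt2
  have h0 := sqrt2_pos.ne'
  funext j
  fin_cases j <;>
    · simp only [Matrix.mulVec, dotProduct, Fin.sum_univ_three, sigma2'_apply, P8,
        vec3_0, vec3_1, vec3_2, vec8_0, vec8_1, vec8_2, vec8_3, vec8_4, vec8_5, vec8_6, vec8_7,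
        Pi.smul_apply, smul_eq_mul, Fin.reduceFinMk]
      field_simp
      ring

lemma mv2 : sigma2'.mulVec (P8 2) = P8 5 := by
  have h := sq_sqrt2
  have h0 := sqrt2_pos.ne'
  funext j
  fin_cases j <;>
    · simp only [Matrix.mulVec, dotProduct, Fin.sum_univ_three, sigma2'_apply, P8,
        vec3_0, vec3_1, vec3_2, vec8_0, vec8_1, vec8_2, vec8_3, vec8_4, vec8_5, vec8_6, vec8_7,
        Pi.smul_apply, smul_eq_mul, Fin.reduceFinMk]
      field_simp
      ring

lemma mv3 : sigma2'.mulVec (P8 3) = P8 6 := by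
  have h := sq_sqrt2
  have h0 := sqrt2_pos.ne'
  funext j
  fin_cases j <;>
    · simp only [Matrix.mulVec, dotProduct, Fin.sum_univ_three, sigma2'_apply, P8,
        vec3_0, vec3_1, vec3_2, vec8_0, vec8_1, vec8_2, vec8_3, vec8_4, vec8_5, vec8_6, vec8_7,
        Pi.smul_apply, smul_eq_mul, Fin.reduceFinMk]
      field_simp
      ring

/-! ### edgeAct cardinality bound -/
lemma edgeAct_card_le {u : GL (Fin 3) ℝ} {A A' : Finset (Sym2 (Fin 8))}
    (h : edgeAct u A A') : A'.card ≤ A.card := by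
  classical
  have H : ∀ e' ∈ A', ∃ e ∈ A, ∃ i j i' j' : Fin 8, e = s(i, j) ∧ e' = s(i', j') ∧
      (↑u : Matrix (Fin 3) (Fin 3) ℝ).mulVec (P8 i) = P8 i' ∧
      (↑u : Matrix (Fin 3) (Fin 3) ℝ).mulVec (P8 j) = P8 j' := fun e' he' => (h e').mp he'
  choose! f hfA i j i' j' h1 h2 h3 h4 using H
  apply Finset.card_le_card_of_injOn f hfA
  intro e1 he1' e2 he2' hfe
  have he1 : e1 ∈ A' := he1'
  have he2 : e2 ∈ A' := he2'
  have hs : s(i e1, j e1) = s(i e2, j e2) := by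
    rw [← h1 e1 he1, ← h1 e2 he2, hfe]
  rw [Sym2.eq_iff] at hs
  rcases hs with ⟨hi, hj⟩ | ⟨hi, hj⟩
  · have hi' : i' e1 = i' e2 :=
      P8_inj (by rw [← h3 e1 he1, ← h3 e2 he2, hi])
    have hj' : j' e1 = j' e2 :=
      P8_inj (by rw [← h4 e1 he1, ← h4 e2 he2, hj])
    rw [h2 e1 he1, h2 e2 he2, hi', hj']
  · have hi' : i' e1 = j' e2 :=
      P8_inj (by rw [← h3 e1 he1, ← h4 e2 he2, hi])
    have hj' : j' e1 = i' e2 :=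
      P8_inj (by rw [← h4 e1 he1, ← h3 e2 he2, hj])
    rw [h2 e1 he1, h2 e2 he2, hi', hj', Sym2.eq_swap]

lemma card_Etop : Etop.card = 4 := by decide
lemma card_Ebot : Ebot.card = 4 := by decide
lemma card_union : (Etop ∪ Ebot).card = 8 := by decide

/-! ### edgeAct u2 Etop Ebot -/
lemma back_step {a b a' b' ma mb : Fin 8}
    (hma : sigma2'.mulVec (P8 a) = P8 ma) (hmb : sigma2'.mulVec (P8 b) = P8 mb)
    (ha : (↑u2 : Matrix (Fin 3) (Fin 3) ℝ).mulVec (P8 a) = P8 a')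
    (hb : (↑u2 : Matrix (Fin 3) (Fin 3) ℝ).mulVec (P8 b) = P8 b') :
    s(a', b') = s(ma, mb) := by
  have h1 : a' = ma := P8_inj (ha.symm.trans hma)
  have h2 : b' = mb := P8_inj (hb.symm.trans hmb)
  rw [h1, h2]

lemma edgeAct_u2 : edgeAct u2 Etop Ebot := by
  intro e'
  constructor
  · intro he'
    have hmem : ∀ x : Sym2 (Fin 8), x ∈ Ebot →
        x = s(4,5) ∨ x = s(5,6) ∨ x = s(6,7) ∨ x = s(7,4) := by decide
    rcases hmem e' he' with h | h | h | h
    · exact ⟨s(1, 2), by decide, 1, 2, 4, 5, rfl, h, mv1, mv2⟩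
    · exact ⟨s(2, 3), by decide, 2, 3, 5, 6, rfl, h, mv2, mv3⟩
    · exact ⟨s(3, 0), by decide, 3, 0, 6, 7, rfl, h, mv3, mv0⟩
    · exact ⟨s(0, 1), by decide, 0, 1, 7, 4, rfl, h, mv0, mv1⟩
  · rintro ⟨e, he, a, b, a', b', he1, he2, ha, hb⟩
    have hmem : ∀ x : Sym2 (Fin 8), x ∈ Etop →
        x = s(0,1) ∨ x = s(1,2) ∨ x = s(2,3) ∨ x = s(3,0) := by decide
    rw [he2]
    rcases hmem e he with h | h | h | h <;>
      · rw [h] at he1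
        rw [Sym2.eq_iff] at he1
        rcases he1 with ⟨hx, hy⟩ | ⟨hx, hy⟩ <;>
          subst hx <;> subst hy <;>
          first
            | (rw [back_step mv0 mv1 ha hb]; decide)
            | (rw [back_step mv1 mv0 ha hb]; decide)
            | (rw [back_step mv1 mv2 ha hb]; decide)
            | (rw [back_step mv2 mv1 ha hb]; decide)
            | (rw [back_step mv2 mv3 ha hb]; decide)
            | (rw [back_step mv3 mv2 ha hb]; decide)
            | (rw [back_step mv3 mv0 ha hb]; decide)
            | (rw [back_step mv0 mv3 ha hb]; decide)

/-! ### parity classification -/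
lemma pair_parity {A : Finset (Sym2 (Fin 8))} {i : Fin 8} {a b : Sym2 (Fin 8)}
    [inst : DecidablePred fun e : Sym2 (Fin 8) => i ∈ e]
    (hab : a ≠ b) (hsub : ∀ e ∈ A, (i ∈ e ↔ e = a ∨ e = b)) :
    Even ((A.filter fun e => i ∈ e).card) ↔ (a ∈ A ↔ b ∈ A) := by
  classical
  have hf : (A.filter fun e => i ∈ e) = A ∩ {a, b} := by
    ext e
    simp only [Finset.mem_filter, Finset.mem_inter, Finset.mem_insert, Finset.mem_singleton]
    constructor
    · rintro ⟨he, hie⟩; exact ⟨he, (hsub e he).mp hie⟩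
    · rintro ⟨he, h2⟩; exact ⟨he, (hsub e he).mpr h2⟩
  rw [hf]
  by_cases ha : a ∈ A <;> by_cases hb : b ∈ A
  · have h2 : A ∩ {a, b} = {a, b} := by
      ext e
      simp only [Finset.mem_inter, Finset.mem_insert, Finset.mem_singleton]
      constructor
      · rintro ⟨_, h⟩; exact h
      · rintro (rfl | rfl)
        · exact ⟨ha, Or.inl rfl⟩
        · exact ⟨hb, Or.inr rfl⟩
    rw [h2, Finset.card_insert_of_notMem (by simpa using hab), Finset.card_singleton]
    simp [ha, hb]
  · have h2 : A ∩ {a, b} = {a} := by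
      ext e
      simp only [Finset.mem_inter, Finset.mem_insert, Finset.mem_singleton]
      constructor
      · rintro ⟨he, rfl | rfl⟩
        · rfl
        · exact absurd he hb
      · rintro rfl; exact ⟨ha, Or.inl rfl⟩
    rw [h2, Finset.card_singleton]
    simp [ha, hb]
  · have h2 : A ∩ {a, b} = {b} := by
      ext e
      simp only [Finset.mem_inter, Finset.mem_insert, Finset.mem_singleton]
      constructor
      · rintro ⟨he, rfl | rfl⟩
        · exact absurd he ha
        · rfl
      · rintro rfl; exact ⟨hb, Or.inr rfl⟩
    rw [h2, Finset.card_singleton]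
    simp [ha, hb]
  · have h2 : A ∩ {a, b} = ∅ := by
      ext e
      simp only [Finset.mem_inter, Finset.mem_insert, Finset.mem_singleton,
        Finset.notMem_empty, iff_false, not_and]
      rintro he (rfl | rfl)
      · exact ha he
      · exact hb he
    rw [h2, Finset.card_empty]
    simp [ha, hb]

lemma mem_list {A : Finset (Sym2 (Fin 8))} (hA : A ⊆ Etop ∪ Ebot) :
    ∀ e ∈ A, e = s(0,1) ∨ e = s(1,2) ∨ e = s(2,3) ∨ e = s(3,0) ∨
      e = s(4,5) ∨ e = s(5,6) ∨ e = s(6,7) ∨ e = s(7,4) := by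
  intro e he
  have h8 : ∀ x : Sym2 (Fin 8), x ∈ Etop ∪ Ebot → x = s(0,1) ∨ x = s(1,2) ∨ x = s(2,3) ∨
      x = s(3,0) ∨ x = s(4,5) ∨ x = s(5,6) ∨ x = s(6,7) ∨ x = s(7,4) := by decide
  exact h8 e (hA he)

lemma evenIncidence_iff {A : Finset (Sym2 (Fin 8))} (hA : A ⊆ Etop ∪ Ebot) :
    EvenIncidence A ↔
      ((s(0,1) ∈ A ↔ s(1,2) ∈ A) ∧ (s(1,2) ∈ A ↔ s(2,3) ∈ A) ∧ (s(2,3) ∈ A ↔ s(3,0) ∈ A) ∧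
       (s(4,5) ∈ A ↔ s(5,6) ∈ A) ∧ (s(5,6) ∈ A ↔ s(6,7) ∈ A) ∧ (s(6,7) ∈ A ↔ s(7,4) ∈ A)) := by
  have hm := mem_list hA
  constructor
  · intro hE
    refine ⟨?_, ?_, ?_, ?_, ?_, ?_⟩
    · exact (pair_parity (by decide) (fun e he => by
        rcases hm e he with rfl|rfl|rfl|rfl|rfl|rfl|rfl|rfl <;> decide)).mp (hE 1)
    · exact (pair_parity (by decide) (fun e he => by
        rcases hm e he with rfl|rfl|rfl|rfl|rfl|rfl|rfl|rfl <;> decide)).mp (hE 2)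
    · exact (pair_parity (by decide) (fun e he => by
        rcases hm e he with rfl|rfl|rfl|rfl|rfl|rfl|rfl|rfl <;> decide)).mp (hE 3)
    · exact (pair_parity (by decide) (fun e he => by
        rcases hm e he with rfl|rfl|rfl|rfl|rfl|rfl|rfl|rfl <;> decide)).mp (hE 5)
    · exact (pair_parity (by decide) (fun e he => by
        rcases hm e he with rfl|rfl|rfl|rfl|rfl|rfl|rfl|rfl <;> decide)).mp (hE 6)
    · exact (pair_parity (by decide) (fun e he => by
        rcases hm e he with rfl|rfl|rfl|rfl|rfl|rfl|rfl|rfl <;> decide)).mp (hE 7)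
  · rintro ⟨c1, c2, c3, c5, c6, c7⟩ i
    fin_cases i
    · exact (pair_parity (a := s(0,1)) (b := s(3,0)) (by decide) (fun e he => by
        rcases hm e he with rfl|rfl|rfl|rfl|rfl|rfl|rfl|rfl <;> decide)).mpr (by tauto)
    · exact (pair_parity (a := s(0,1)) (b := s(1,2)) (by decide) (fun e he => by
        rcases hm e he with rfl|rfl|rfl|rfl|rfl|rfl|rfl|rfl <;> decide)).mpr (by tauto)
    · exact (pair_parity (a := s(1,2)) (b := s(2,3)) (by decide) (fun e he => by
        rcases hm e he with rfl|rfl|rfl|rfl|rfl|rfl|rfl|rfl <;> decide)).mpr (by tauto)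
    · exact (pair_parity (a := s(2,3)) (b := s(3,0)) (by decide) (fun e he => by
        rcases hm e he with rfl|rfl|rfl|rfl|rfl|rfl|rfl|rfl <;> decide)).mpr (by tauto)
    · exact (pair_parity (a := s(4,5)) (b := s(7,4)) (by decide) (fun e he => by
        rcases hm e he with rfl|rfl|rfl|rfl|rfl|rfl|rfl|rfl <;> decide)).mpr (by tauto)
    · exact (pair_parity (a := s(4,5)) (b := s(5,6)) (by decide) (fun e he => by
        rcases hm e he with rfl|rfl|rfl|rfl|rfl|rfl|rfl|rfl <;> decide)).mpr (by tauto)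
    · exact (pair_parity (a := s(5,6)) (b := s(6,7)) (by decide) (fun e he => by
        rcases hm e he with rfl|rfl|rfl|rfl|rfl|rfl|rfl|rfl <;> decide)).mpr (by tauto)
    · exact (pair_parity (a := s(6,7)) (b := s(7,4)) (by decide) (fun e he => by
        rcases hm e he with rfl|rfl|rfl|rfl|rfl|rfl|rfl|rfl <;> decide)).mpr (by tauto)

lemma mem_union_list : ∀ e ∈ Etop ∪ Ebot, e = s(0,1) ∨ e = s(1,2) ∨ e = s(2,3) ∨
    e = s(3,0) ∨ e = s(4,5) ∨ e = s(5,6) ∨ e = s(6,7) ∨ e = s(7,4) := by decide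

lemma mem_top_list : ∀ e ∈ Etop, e = s(0,1) ∨ e = s(1,2) ∨ e = s(2,3) ∨ e = s(3,0) := by decide

lemma mem_bot_list : ∀ e ∈ Ebot, e = s(4,5) ∨ e = s(5,6) ∨ e = s(6,7) ∨ e = s(7,4) := by decide

lemma classify {A : Finset (Sym2 (Fin 8))} (hA : A ⊆ Etop ∪ Ebot) :
    EvenIncidence A ↔ (A = ∅ ∨ A = Etop ∨ A = Ebot ∨ A = Etop ∪ Ebot) := by
  rw [evenIncidence_iff hA]
  have hm := mem_list hA
  constructor
  · rintro ⟨c1, c2, c3, c5, c6, c7⟩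
    by_cases ht : s(0,1) ∈ A <;> by_cases hb : s(4,5) ∈ A
    · right; right; right
      apply Finset.Subset.antisymm hA
      intro e he
      rcases mem_union_list e he with rfl|rfl|rfl|rfl|rfl|rfl|rfl|rfl
      · exact ht
      · exact c1.mp ht
      · exact c2.mp (c1.mp ht)
      · exact c3.mp (c2.mp (c1.mp ht))
      · exact hb
      · exact c5.mp hb
      · exact c6.mp (c5.mp hb)
      · exact c7.mp (c6.mp (c5.mp hb))
    · right; left
      apply Finset.Subset.antisymm
      · intro e he
        rcases hm e he with rfl|rfl|rfl|rfl|rfl|rfl|rfl|rfl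
        · decide
        · decide
        · decide
        · decide
        · exact absurd he hb
        · exact absurd (c5.mpr he) hb
        · exact absurd (c5.mpr (c6.mpr he)) hb
        · exact absurd (c5.mpr (c6.mpr (c7.mpr he))) hb
      · intro e he
        rcases mem_top_list e he with rfl|rfl|rfl|rfl
        · exact ht
        · exact c1.mp ht
        · exact c2.mp (c1.mp ht)
        · exact c3.mp (c2.mp (c1.mp ht))
    · right; right; left
      apply Finset.Subset.antisymm
      · intro e he
        rcases hm e he with rfl|rfl|rfl|rfl|rfl|rfl|rfl|rfl
        · exact absurd he ht
        · exact absurd (c1.mpr he) ht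
        · exact absurd (c1.mpr (c2.mpr he)) ht
        · exact absurd (c1.mpr (c2.mpr (c3.mpr he))) ht
        · decide
        · decide
        · decide
        · decide
      · intro e he
        rcases mem_bot_list e he with rfl|rfl|rfl|rfl
        · exact hb
        · exact c5.mp hb
        · exact c6.mp (c5.mp hb)
        · exact c7.mp (c6.mp (c5.mp hb))
    · left
      rw [Finset.eq_empty_iff_forall_notMem]
      intro e he
      rcases hm e he with rfl|rfl|rfl|rfl|rfl|rfl|rfl|rfl
      · exact ht he
      · exact ht (c1.mpr he)
      · exact ht (c1.mpr (c2.mpr he))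
      · exact ht (c1.mpr (c2.mpr (c3.mpr he)))
      · exact hb he
      · exact hb (c5.mpr he)
      · exact hb (c5.mpr (c6.mpr he))
      · exact hb (c5.mpr (c6.mpr (c7.mpr he)))
  · rintro (rfl | rfl | rfl | rfl) <;> refine ⟨?_, ?_, ?_, ?_, ?_, ?_⟩ <;> decide

/-- The subsets of the eight square edges in which every point lies on an even number
of edges are exactly `∅`, `Etop`, `Ebot` and `Etop ∪ Ebot`, and under the action of
`G'` these fall into exactly `3` orbits, namely `{∅}`, `{Etop, Ebot}` and
`{Etop ∪ Ebot}`. -/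
theorem stmt_14 :
    (∀ A ⊆ Etop ∪ Ebot, (EvenIncidence A ↔
      A = ∅ ∨ A = Etop ∨ A = Ebot ∨ A = Etop ∪ Ebot)) ∧
    (∃ u ∈ G', edgeAct u Etop Ebot) ∧
    (¬ ∃ u ∈ G', edgeAct u ∅ Etop) ∧
    (¬ ∃ u ∈ G', edgeAct u ∅ Ebot) ∧
    (¬ ∃ u ∈ G', edgeAct u ∅ (Etop ∪ Ebot)) ∧
    (¬ ∃ u ∈ G', edgeAct u Etop (Etop ∪ Ebot)) ∧
    (¬ ∃ u ∈ G', edgeAct u Ebot (Etop ∪ Ebot)) := by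
  refine ⟨fun A hA => classify hA, ⟨u2, u2_mem, edgeAct_u2⟩, ?_, ?_, ?_, ?_, ?_⟩
  · rintro ⟨u, -, h⟩
    obtain ⟨e, he, -⟩ := (h s(0,1)).mp (by decide)
    exact absurd he (Finset.notMem_empty e)
  · rintro ⟨u, -, h⟩
    obtain ⟨e, he, -⟩ := (h s(4,5)).mp (by decide)
    exact absurd he (Finset.notMem_empty e)
  · rintro ⟨u, -, h⟩
    obtain ⟨e, he, -⟩ := (h s(0,1)).mp (by decide)
    exact absurd he (Finset.notMem_empty e)
  · rintro ⟨u, -, h⟩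
    have := edgeAct_card_le h
    rw [card_union, card_Etop] at this
    omega
  · rintro ⟨u, -, h⟩
    have := edgeAct_card_le h
    rw [card_union, card_Ebot] at this
    omega
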